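/- If V : Σ → ℝ is a fixed point of the renormalization operator 𝓡 (i.e. 𝓡V = V) and V is integrable with respect to the unique shift-invariant measure μ_𝕂 on the Thue-Morse subshift 𝕂, then ∫_𝕂 V dμ_𝕂 = 0. -/

import Mathlib

open Filter Topology MeasureTheory ENNReal

/-- The left shift on the full 2-shift `Σ = {0,1}^ℕ`. -/
def shift (x : ℕ → Bool) : ℕ → Bool := fun n => x (n + 1)

/-- The Thue–Morse substitution `H : 0 → 01, 1 → 10`, acting on sequences. -/
def subH (x : ℕ → Bool) : ℕ → Bool :=
  fun n => if n % 2 = 0 then x (n / 2) else !x (n / 2)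

/-- The Thue–Morse sequence: `tm n` is the parity of the number of 1s in
the binary expansion of `n`. -/
def tm (n : ℕ) : Bool := (Nat.digits 2 n).count 1 % 2 == 1

/-- The fixed point of `subH` starting with 0. -/
def rho0 : ℕ → Bool := tm

/-- The fixed point of `subH` starting with 1. -/
def rho1 : ℕ → Bool := fun n => !tm n

/-- `rhoB b` is the fixed point of `subH` starting with digit `b`. -/
def rhoB : Bool → ℕ → Bool
  | false => rho0
  | true => rho1

/-- The digit-flipping involution. -/
def flipSeq (x : ℕ → Bool) : ℕ → Bool := fun n => !x n

/-- Prepend a digit to a sequence. -/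
def consTM (a : Bool) (x : ℕ → Bool) : ℕ → Bool
  | 0 => a
  | n + 1 => x n

/-- The Thue–Morse subshift: the closure of the shift orbit of `rho0`. -/
def TMK : Set (ℕ → Bool) := closure {y | ∃ n, y = shift^[n] rho0}

/-- The renormalization operator `𝓡V = V ∘ σ ∘ H + V ∘ H`. -/
def RenOp (V : (ℕ → Bool) → ℝ) : (ℕ → Bool) → ℝ :=
  fun x => V (shift (subH x)) + V (subH x)

/-- The Birkhoff sum `S_k V = ∑_{i<k} V ∘ σⁱ`. -/
def birkhoff (V : (ℕ → Bool) → ℝ) (k : ℕ) (x : ℕ → Bool) : ℝ :=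
  ∑ i ∈ Finset.range k, V (shift^[i] x)

/-- The potential `U_c`: value `c` on `[01]`, `-c` on `[10]`, `0` on `[00] ∪ [11]`. -/
def Upot (c : ℝ) (x : ℕ → Bool) : ℝ :=
  if x 0 = false ∧ x 1 = true then c
  else if x 0 = true ∧ x 1 = false then -c else 0

/-- The sliding block code `π(x)_k = 1` iff `x_k ≠ x_{k+1}`. -/
def piTM (x : ℕ → Bool) : ℕ → Bool := fun n => x n != x (n + 1)

/-- The Feigenbaum substitution `0 → 11, 1 → 10`, acting on sequences. -/
def subHfeig (x : ℕ → Bool) : ℕ → Bool :=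
  fun n => if n % 2 = 0 then true else !x (n / 2)

lemma cont_shift : Continuous shift := continuous_pi fun n => continuous_apply (n+1)

lemma cont_subH : Continuous subH := by
  refine continuous_pi fun n => ?_
  by_cases h : n % 2 = 0
  · simpa [subH, h] using continuous_apply (n/2)
  · simp only [subH, if_neg h]
    exact (continuous_of_discreteTopology (f := Bool.not)).comp (continuous_apply (n/2))

lemma meas_shift : Measurable shift := cont_shift.measurable
lemma meas_subH : Measurable subH := cont_subH.measurable

lemma subH_shift (x : ℕ → Bool) : subH (shift x) = shift (shift (subH x)) := by
  funext n
  simp only [subH, shift, Nat.add_mod_right]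
  rw [show (n + 1 + 1) / 2 = n / 2 + 1 from by omega,
     show (n + 1 + 1) % 2 = n % 2 from by omega]

lemma tm_two_mul (n : ℕ) : tm (2 * n) = tm n := by
  rcases Nat.eq_zero_or_pos n with h | h
  · simp [h]
  · have : Nat.digits 2 (2 * n) = (2 * n) % 2 :: Nat.digits 2 ((2 * n) / 2) :=
      Nat.digits_def' (by norm_num) (by omega)
    simp [tm, this, Nat.mul_div_cancel_left n (by norm_num : 0 < 2)]

lemma tm_two_mul_add_one (n : ℕ) : tm (2 * n + 1) = !tm n := by
  have : Nat.digits 2 (2 * n + 1) = (2 * n + 1) % 2 :: Nat.digits 2 ((2 * n + 1) / 2) :=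
    Nat.digits_def' (by norm_num) (by omega)
  have h1 : (2 * n + 1) % 2 = 1 := by omega
  have h2 : (2 * n + 1) / 2 = n := by omega
  rw [tm, this, h1, h2]
  simp only [List.count_cons, tm]
  rcases Nat.mod_two_eq_zero_or_one ((Nat.digits 2 n).count 1) with h | h <;>
    · simp [Nat.add_mod, h]

lemma subH_rho0 : subH rho0 = rho0 := by
  funext n
  rcases Nat.mod_two_eq_zero_or_one n with h | h
  · have : n = 2 * (n / 2) := by omega
    simp only [subH]
    rw [if_pos h]
    conv_rhs => rw [this]
    exact (tm_two_mul (n/2)).symm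
  · have : n = 2 * (n / 2) + 1 := by omega
    simp only [subH]
    rw [if_neg (show ¬ n % 2 = 0 by omega)]
    conv_rhs => rw [this]
    exact (tm_two_mul_add_one (n/2)).symm

lemma subH_shift_iter (k : ℕ) (x : ℕ → Bool) :
    subH (shift^[k] x) = shift^[2 * k] (subH x) := by
  induction k generalizing x with
  | zero => simp
  | succ k ih =>
    rw [Function.iterate_succ_apply, ih (shift x), subH_shift]
    rw [show 2 * (k+1) = 2*k + 2 by ring]
    rw [Function.iterate_add_apply]
    simp [Function.iterate_succ_apply]

lemma shift_mem_TMK {x : ℕ → Bool} (hx : x ∈ TMK) : shift x ∈ TMK := by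
  have h1 : shift '' {y | ∃ n, y = shift^[n] rho0} ⊆ {y | ∃ n, y = shift^[n] rho0} := by
    rintro _ ⟨y, ⟨n, rfl⟩, rfl⟩
    exact ⟨n + 1, by rw [Function.iterate_succ_apply']⟩
  have := (image_closure_subset_closure_image cont_shift (s := {y | ∃ n, y = shift^[n] rho0}))
  exact closure_mono h1 (this ⟨x, hx, rfl⟩)

lemma subH_mem_TMK {x : ℕ → Bool} (hx : x ∈ TMK) : subH x ∈ TMK := by
  have h1 : subH '' {y | ∃ n, y = shift^[n] rho0} ⊆ {y | ∃ n, y = shift^[n] rho0} := by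
    rintro _ ⟨y, ⟨n, rfl⟩, rfl⟩
    exact ⟨2 * n, by rw [subH_shift_iter, subH_rho0]⟩
  have := (image_closure_subset_closure_image cont_subH (s := {y | ∃ n, y = shift^[n] rho0}))
  exact closure_mono h1 (this ⟨x, hx, rfl⟩)

lemma TMK_closed : IsClosed TMK := isClosed_closure
lemma TMK_meas : MeasurableSet TMK := TMK_closed.measurableSet

lemma half_mul_two : (1/2 : ℝ≥0∞) * 2 = 1 := by
  rw [one_div]; exact ENNReal.inv_mul_cancel two_ne_zero ENNReal.ofNat_ne_top

lemma meas_sSH : Measurable (shift ∘ subH) := meas_shift.comp meas_subH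


/-- if `V` is a fixed point of `𝓡` which is integrable with respect to
the unique shift-invariant probability measure `μ` on the Thue–Morse subshift `𝕂`,
then `∫_𝕂 V dμ = 0`. -/
theorem stmt9 (mu : Measure (ℕ → Bool)) [IsProbabilityMeasure mu]
    (hinv : MeasurePreserving shift mu mu) (hK : mu TMK = 1)
    (huniq : ∀ nu : Measure (ℕ → Bool), IsProbabilityMeasure nu →
      MeasurePreserving shift nu nu → nu TMK = 1 → nu = mu)
    (V : (ℕ → Bool) → ℝ) (hV : Integrable V mu) (hfix : RenOp V = V) :
    ∫ x in TMK, V x ∂mu = 0 := by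
  have hfix' : (fun x => V (shift (subH x)) + V (subH x)) = V := hfix
  set mH := Measure.map subH mu with hmH
  set mSH := Measure.map (shift ∘ subH) mu with hmSH
  set nu : Measure (ℕ → Bool) := (1/2 : ℝ≥0∞) • (mH + mSH) with hnu
  have hPH : IsProbabilityMeasure mH := Measure.isProbabilityMeasure_map meas_subH.aemeasurable
  have hPSH : IsProbabilityMeasure mSH := Measure.isProbabilityMeasure_map meas_sSH.aemeasurable
  have hPnu : IsProbabilityMeasure nu := by
    constructor
    rw [hnu, Measure.smul_apply, Measure.add_apply, measure_univ, measure_univ, smul_eq_mul,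
      one_add_one_eq_two]
    exact half_mul_two
  -- shift invariance of nu
  have hcomm : subH ∘ shift = shift ∘ (shift ∘ subH) := by
    funext x; exact subH_shift x
  have hmap : Measure.map shift nu = nu := by
    rw [hnu, Measure.map_smul, Measure.map_add _ _ meas_shift, hmH, hmSH,
      Measure.map_map meas_shift meas_subH,
      Measure.map_map meas_shift meas_sSH, ← hcomm,
      ← Measure.map_map meas_subH meas_shift, hinv.map_eq]
    rw [add_comm]
  have hpres : MeasurePreserving shift nu nu := ⟨meas_shift, hmap⟩
  -- nu TMK = 1
  have hsub1 : TMK ⊆ subH ⁻¹' TMK := fun x hx => subH_mem_TMK hx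
  have hsub2 : TMK ⊆ (shift ∘ subH) ⁻¹' TMK := fun x hx => shift_mem_TMK (subH_mem_TMK hx)
  have hmHK : mH TMK = 1 := by
    rw [hmH, Measure.map_apply meas_subH TMK_meas]
    exact le_antisymm prob_le_one (hK ▸ measure_mono hsub1)
  have hmSHK : mSH TMK = 1 := by
    rw [hmSH, Measure.map_apply meas_sSH TMK_meas]
    exact le_antisymm prob_le_one (hK ▸ measure_mono hsub2)
  have hnuK : nu TMK = 1 := by
    rw [hnu, Measure.smul_apply, Measure.add_apply, hmHK, hmSHK, smul_eq_mul, one_add_one_eq_two]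
    exact half_mul_two
  have heq : nu = mu := huniq nu hPnu hpres hnuK
  -- integrability pieces
  have h2nu : mH + mSH = (2 : ℝ≥0∞) • nu := by
    rw [hnu, smul_smul,
      show (2:ℝ≥0∞) * (1/2) = 1 from by
        rw [one_div]; exact ENNReal.mul_inv_cancel two_ne_zero ENNReal.ofNat_ne_top,
      one_smul]
  have hVnu : Integrable V ((2 : ℝ≥0∞) • nu) := by
    rw [heq]; exact hV.smul_measure (by norm_num)
  have hIH : Integrable V mH := hVnu.mono_measure (h2nu ▸ Measure.le_add_right le_rfl)
  have hISH : Integrable V mSH := hVnu.mono_measure (h2nu ▸ Measure.le_add_left le_rfl)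
  have hiH : ∫ x, V x ∂mH = ∫ x, V (subH x) ∂mu := by
    rw [hmH, integral_map meas_subH.aemeasurable (hmH ▸ hIH).aestronglyMeasurable]
  have hiSH : ∫ x, V x ∂mSH = ∫ x, V (shift (subH x)) ∂mu := by
    rw [hmSH, integral_map meas_sSH.aemeasurable (hmSH ▸ hISH).aestronglyMeasurable]
    rfl
  have hIcH : Integrable (fun x => V (subH x)) mu :=
    (integrable_map_measure hIH.aestronglyMeasurable meas_subH.aemeasurable).mp hIH
  have hIcSH : Integrable (fun x => V (shift (subH x))) mu :=
    (integrable_map_measure hISH.aestronglyMeasurable meas_sSH.aemeasurable).mp hISH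
  have key : ∫ x, V x ∂mu = (1/2 : ℝ) * ∫ x, V x ∂mu := by
    conv_lhs => rw [← heq, hnu]
    rw [integral_smul_measure, integral_add_measure hIH hISH, hiH, hiSH]
    have : ∫ x, V (shift (subH x)) ∂mu + ∫ x, V (subH x) ∂mu
        = ∫ x, (V (shift (subH x)) + V (subH x)) ∂mu := (integral_add hIcSH hIcH).symm
    rw [add_comm (∫ x, V (subH x) ∂mu), this]
    simp only [hfix']
    norm_num
  have hint : ∫ x, V x ∂mu = 0 := by linarith
  have hres : mu.restrict TMK = mu :=
    Measure.restrict_eq_self_of_ae_mem (by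
      rw [MeasureTheory.ae_iff]
      exact prob_compl_eq_zero_iff TMK_meas |>.mpr hK)
  rw [hres, hint]
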